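/- Let G be a finite group and f : G → ℂ with ‖f‖_{A(G)} ≤ M. Then there exists a finite-dimensional Hilbert space H, a group homomorphism π : G → U(H) into the unitary group of H, and vectors v, w ∈ H with ‖v‖·‖w‖ ≤ M, such that f(x) = ⟨π(x)v, w⟩ for all x ∈ G. -/

import Mathlib

open scoped BigOperators ComplexOrder

noncomputable def convMatrix {G : Type*} [Group G] [Fintype G] (f : G → ℂ) :
    Matrix G G ℂ := fun x y => f (x * y⁻¹) / (Fintype.card G)

/-- The algebra norm `‖f‖_{A(G)}`: the sum of the singular values of the
convolution operator `g ↦ f ∗ g` on `L₂(G)`. -/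
noncomputable def algNorm {G : Type*} [Group G] [Fintype G] [DecidableEq G]
    (f : G → ℂ) : ℝ :=
  (((Matrix.posSemidef_conjTranspose_mul_self (convMatrix f)).isHermitian.eigenvectorUnitary : Matrix G G ℂ) *
    Matrix.diagonal (((↑) : ℝ → ℂ) ∘ (Real.sqrt ·) ∘
      (Matrix.posSemidef_conjTranspose_mul_self (convMatrix f)).isHermitian.eigenvalues) *
    (star (Matrix.posSemidef_conjTranspose_mul_self (convMatrix f)).isHermitian.eigenvectorUnitary :
      Matrix G G ℂ)).trace.re

namespace AuxCFC

open Matrix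

variable {n : Type*} [Fintype n] [DecidableEq n] {B : Matrix n n ℂ} (hB : B.IsHermitian)

lemma cfc_mul (f g : ℝ → ℝ) :
    hB.cfc f * hB.cfc g = hB.cfc fun t => f t * g t := by
  unfold Matrix.IsHermitian.cfc
  simp only [Unitary.conjStarAlgAut_apply]
  have h1 : star (hB.eigenvectorUnitary : Matrix n n ℂ) * (hB.eigenvectorUnitary : Matrix n n ℂ)
      = 1 := Unitary.coe_star_mul_self hB.eigenvectorUnitary
  have h2 : ∀ X : Matrix n n ℂ, star (hB.eigenvectorUnitary : Matrix n n ℂ) *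
      ((hB.eigenvectorUnitary : Matrix n n ℂ) * X) = X := fun X => by
    rw [← mul_assoc, h1, one_mul]
  have h4 : (RCLike.ofReal ∘ (fun t => f t * g t) ∘ hB.eigenvalues : n → ℂ)
      = fun i => (RCLike.ofReal ∘ f ∘ hB.eigenvalues) i * (RCLike.ofReal ∘ g ∘ hB.eigenvalues) i := by
    funext i
    simp
  have h3 : (Matrix.diagonal (RCLike.ofReal ∘ f ∘ hB.eigenvalues) : Matrix n n ℂ) *
      Matrix.diagonal (RCLike.ofReal ∘ g ∘ hB.eigenvalues) =
      Matrix.diagonal (RCLike.ofReal ∘ (fun t => f t * g t) ∘ hB.eigenvalues) := by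
    rw [diagonal_mul_diagonal, h4]
  simp only [mul_assoc, h2]
  rw [← mul_assoc (Matrix.diagonal (RCLike.ofReal ∘ f ∘ hB.eigenvalues)), h3]

lemma cfc_congr {f g : ℝ → ℝ} (h : ∀ i, f (hB.eigenvalues i) = g (hB.eigenvalues i)) :
    hB.cfc f = hB.cfc g := by
  unfold Matrix.IsHermitian.cfc
  have : (RCLike.ofReal ∘ f ∘ hB.eigenvalues : n → ℂ) = RCLike.ofReal ∘ g ∘ hB.eigenvalues := by
    funext i
    simp [h i]
  rw [this]

lemma cfc_id : hB.cfc (fun t => t) = B := by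
  conv_rhs => rw [hB.spectral_theorem]
  rfl

lemma cfc_one : hB.cfc (fun _ => 1) = 1 := by
  unfold Matrix.IsHermitian.cfc
  simp only [Unitary.conjStarAlgAut_apply]
  have : (Matrix.diagonal (RCLike.ofReal ∘ (fun _ : ℝ => (1:ℝ)) ∘ hB.eigenvalues) : Matrix n n ℂ) = 1 := by
    simp [Function.comp_def]
  rw [this, mul_one]
  exact Unitary.coe_mul_star_self hB.eigenvectorUnitary

lemma cfc_sub (f g : ℝ → ℝ) :
    hB.cfc (fun t => f t - g t) = hB.cfc f - hB.cfc g := by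
  unfold Matrix.IsHermitian.cfc
  simp only [Unitary.conjStarAlgAut_apply]
  have h3 : (Matrix.diagonal (RCLike.ofReal ∘ (fun t => f t - g t) ∘ hB.eigenvalues) : Matrix n n ℂ) =
      Matrix.diagonal (RCLike.ofReal ∘ f ∘ hB.eigenvalues) -
        Matrix.diagonal (RCLike.ofReal ∘ g ∘ hB.eigenvalues) := by
    have h4 : (RCLike.ofReal ∘ (fun t => f t - g t) ∘ hB.eigenvalues : n → ℂ)
        = fun i => (RCLike.ofReal ∘ f ∘ hB.eigenvalues) i - (RCLike.ofReal ∘ g ∘ hB.eigenvalues) i := by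
      funext i
      simp
    rw [h4, diagonal_sub]
  rw [h3, mul_sub, sub_mul]

lemma cfc_conjTranspose (f : ℝ → ℝ) : (hB.cfc f)ᴴ = hB.cfc f := by
  unfold Matrix.IsHermitian.cfc
  simp only [Unitary.conjStarAlgAut_apply]
  rw [conjTranspose_mul, conjTranspose_mul, diagonal_conjTranspose]
  rw [← star_eq_conjTranspose, ← star_eq_conjTranspose, star_star, mul_assoc]
  have h4 : star (RCLike.ofReal ∘ f ∘ hB.eigenvalues : n → ℂ) = RCLike.ofReal ∘ f ∘ hB.eigenvalues := by
    funext i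
    simp [Pi.star_def]
  rw [h4]

lemma sum_norm_sq_eq_trace {X : Matrix n n ℂ} :
    ∑ p : n × n, ‖X p.1 p.2‖^2 = (Xᴴ * X).trace.re := by
  have h1 : ∀ z : ℂ, ((starRingEnd ℂ) z * z).re = ‖z‖^2 := fun z => by
    rw [mul_comm, Complex.mul_conj]
    rw [Complex.ofReal_re]; simp [Complex.normSq_eq_norm_sq]
  rw [Matrix.trace]
  simp only [Matrix.diag, Matrix.mul_apply, Matrix.conjTranspose_apply, Complex.re_sum]
  rw [Fintype.sum_prod_type]
  rw [Finset.sum_comm]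
  simp [h1]

end AuxCFC

open Matrix in
/-- If `‖f‖_{A(G)} ≤ M` then `f(x) = ⟨π(x)v, w⟩` for a finite-dimensional unitary
representation `π` and vectors `v, w` with `‖v‖·‖w‖ ≤ M`. -/
theorem exists_unitary_rep_of_algNorm_le
    {G : Type*} [Group G] [Fintype G] [DecidableEq G] (f : G → ℂ) (M : ℝ)
    (hf : algNorm f ≤ M) :
    ∃ (H : Type) (_ : NormedAddCommGroup H) (_ : InnerProductSpace ℂ H)
      (_ : FiniteDimensional ℂ H) (π : G →* (H ≃ₗᵢ[ℂ] H)) (v w : H),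
      ‖v‖ * ‖w‖ ≤ M ∧ ∀ x : G, f x = inner ℂ ((π x) v) w := by
  classical
  set A : Matrix G G ℂ := convMatrix f with hA
  have hAA := Matrix.posSemidef_conjTranspose_mul_self A
  set B : Matrix G G ℂ := (hAA.isHermitian.eigenvectorUnitary : Matrix G G ℂ) *
    Matrix.diagonal (((↑) : ℝ → ℂ) ∘ (Real.sqrt ·) ∘ hAA.isHermitian.eigenvalues) *
    (star hAA.isHermitian.eigenvectorUnitary : Matrix G G ℂ) with hBdef
  have hBcfc : B = hAA.isHermitian.cfc Real.sqrt := rfl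
  have hBpsd : B.PosSemidef := by
    have hX := AuxCFC.cfc_conjTranspose hAA.isHermitian (fun t => Real.sqrt (Real.sqrt t))
    rw [hBcfc, AuxCFC.cfc_congr hAA.isHermitian (f := Real.sqrt)
      (g := fun t => Real.sqrt (Real.sqrt t) * Real.sqrt (Real.sqrt t))
      (fun i => (Real.mul_self_sqrt (Real.sqrt_nonneg _)).symm), ← AuxCFC.cfc_mul]
    have := Matrix.posSemidef_conjTranspose_mul_self
      (hAA.isHermitian.cfc fun t => Real.sqrt (Real.sqrt t))
    rwa [hX] at this
  have hB : B.IsHermitian := hBpsd.1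
  have hev : ∀ i, 0 ≤ hB.eigenvalues i := fun i => hBpsd.eigenvalues_nonneg i
  set C : Matrix G G ℂ := hB.cfc Real.sqrt with hCdef
  set P : Matrix G G ℂ := hB.cfc (fun t => (Real.sqrt t)⁻¹) with hPdef
  set D : Matrix G G ℂ := A * P with hDdef
  have hCH : Cᴴ = C := AuxCFC.cfc_conjTranspose hB _
  have hPH : Pᴴ = P := AuxCFC.cfc_conjTranspose hB _
  have hCC : C * C = B := by
    rw [hCdef, AuxCFC.cfc_mul,
      AuxCFC.cfc_congr hB (g := fun t => t) (fun i => Real.mul_self_sqrt (hev i)),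
      AuxCFC.cfc_id]
  have hBB : B * B = Aᴴ * A := by
    rw [hBcfc, AuxCFC.cfc_mul, AuxCFC.cfc_congr hAA.isHermitian
      (f := fun t => Real.sqrt t * Real.sqrt t) (g := fun t => t)
      (fun i => Real.mul_self_sqrt (hAA.eigenvalues_nonneg i)), AuxCFC.cfc_id]
  -- A is unchanged by the "support projection"
  have hAQ : A * hB.cfc (fun t => (Real.sqrt t)⁻¹ * Real.sqrt t) = A := by
    set N : Matrix G G ℂ := hB.cfc (fun t => 1 - (Real.sqrt t)⁻¹ * Real.sqrt t) with hNdef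
    have h1 : B * N = 0 := by
      conv_lhs => rw [← AuxCFC.cfc_id hB]
      rw [hNdef, AuxCFC.cfc_mul]
      have h2 : hB.cfc (fun t => t * (1 - (Real.sqrt t)⁻¹ * Real.sqrt t))
          = hB.cfc (fun t => t - t) := by
        refine AuxCFC.cfc_congr hB (fun i => ?_)
        rcases eq_or_lt_of_le (hev i) with h | h
        · simp [← h]
        · rw [inv_mul_cancel₀ (Real.sqrt_pos.mpr h).ne']
          ring
      rw [h2, AuxCFC.cfc_sub, sub_self]
    have h3 : (A * N)ᴴ * (A * N) = 0 := by
      have hNH : Nᴴ = N := AuxCFC.cfc_conjTranspose hB _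
      calc (A * N)ᴴ * (A * N) = Nᴴ * (Aᴴ * (A * N)) := by
            rw [Matrix.conjTranspose_mul]
            simp only [mul_assoc]
        _ = Nᴴ * (B * (B * N)) := by rw [← mul_assoc Aᴴ A, ← hBB]; rw [mul_assoc]
        _ = 0 := by rw [h1, mul_zero, mul_zero]
    have h4 : A * N = 0 := Matrix.conjTranspose_mul_self_eq_zero.mp h3
    have h5 : hB.cfc (fun t => (Real.sqrt t)⁻¹ * Real.sqrt t) = 1 - N := by
      rw [hNdef, ← AuxCFC.cfc_one hB, ← AuxCFC.cfc_sub]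
      exact AuxCFC.cfc_congr hB (fun i => by ring)
    rw [h5, mul_sub, mul_one, h4, sub_zero]
  have hDC : D * C = A := by
    rw [hDdef, mul_assoc, hPdef, hCdef, AuxCFC.cfc_mul, hAQ]
  have hDD : Dᴴ * D = B := by
    have step : Dᴴ * D = P * ((Aᴴ * A) * P) := by
      rw [hDdef, Matrix.conjTranspose_mul, hPH]
      simp only [mul_assoc]
    rw [step, ← hBB]
    conv_lhs => rw [← AuxCFC.cfc_id hB]
    rw [mul_assoc, hPdef, AuxCFC.cfc_mul, AuxCFC.cfc_mul, AuxCFC.cfc_mul]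
    rw [AuxCFC.cfc_congr hB (g := fun t => t) ?_, AuxCFC.cfc_id]
    intro i
    rcases eq_or_lt_of_le (hev i) with h | h
    · simp [← h]
    · set t := hB.eigenvalues i
      have hs : Real.sqrt t * Real.sqrt t = t := Real.mul_self_sqrt h.le
      have hne : Real.sqrt t ≠ 0 := (Real.sqrt_pos.mpr h).ne'
      field_simp
      rw [Real.sq_sqrt h.le]
  -- Transport everything to a `Type 0` Euclidean space
  let n := Fintype.card G
  let k : G ≃ Fin n := Fintype.equivFin G
  let H : Type := EuclideanSpace ℂ (Fin n × Fin n)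
  let Pi0 : G → (H ≃ₗᵢ[ℂ] H) := fun x =>
    LinearIsometryEquiv.piLpCongrLeft 2 ℂ ℂ
      ((Equiv.prodCongr k k).symm.trans
        ((Equiv.prodCongr (Equiv.mulLeft x) (Equiv.refl G)).trans (Equiv.prodCongr k k)))
  have hPi : ∀ (x : G) (u : H) (p : Fin n × Fin n),
      Pi0 x u p = u (k (x⁻¹ * k.symm p.1), k (k.symm p.2)) := by
    intro x u p
    show (LinearIsometryEquiv.piLpCongrLeft 2 ℂ ℂ _) u p = _
    rw [LinearIsometryEquiv.piLpCongrLeft_apply]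
    simp only [Equiv.piCongrLeft'_apply, Equiv.symm_trans_apply, Equiv.symm_symm]
    rfl
  let π : G →* (H ≃ₗᵢ[ℂ] H) :=
    { toFun := Pi0
      map_one' := by
        apply LinearIsometryEquiv.ext
        intro u
        refine PiLp.ext fun p => ?_
        rw [hPi]
        refine Eq.trans (congrArg u.ofLp ?_) rfl
        rw [inv_one, one_mul, Equiv.apply_symm_apply, Equiv.apply_symm_apply]
      map_mul' := by
        intro x y
        apply LinearIsometryEquiv.ext
        intro u
        refine PiLp.ext fun p => ?_
        rw [hPi, LinearIsometryEquiv.coe_mul, Function.comp_apply, hPi, hPi]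
        refine congrArg u.ofLp ?_
        rw [Equiv.symm_apply_apply, Equiv.symm_apply_apply, _root_.mul_inv_rev, mul_assoc]  }
  let v : H := WithLp.toLp 2 (fun p => C (k.symm p.1) (k.symm p.2))
  let w : H := WithLp.toLp 2 (fun p => D (k.symm p.1) (k.symm p.2))
  have hreC : (∑ p : G × G, ‖C p.1 p.2‖^2) = B.trace.re := by
    rw [AuxCFC.sum_norm_sq_eq_trace, hCH, hCC]
  have hreD : (∑ p : G × G, ‖D p.1 p.2‖^2) = B.trace.re := by
    rw [AuxCFC.sum_norm_sq_eq_trace, hDD]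
  have hTnn : 0 ≤ B.trace.re := by
    rw [← hreC]
    positivity
  have hsumv : (∑ p : Fin n × Fin n, ‖v p‖^2) = B.trace.re := by
    rw [← hreC]
    exact (Fintype.sum_equiv (Equiv.prodCongr k k) _ _ (fun p => by simp [v])).symm
  have hsumw : (∑ p : Fin n × Fin n, ‖w p‖^2) = B.trace.re := by
    rw [← hreD]
    exact (Fintype.sum_equiv (Equiv.prodCongr k k) _ _ (fun p => by simp [w])).symm
  have hv : ‖v‖ = Real.sqrt (B.trace.re) := by
    rw [EuclideanSpace.norm_eq]
    rw [hsumv]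
  have hw : ‖w‖ = Real.sqrt (B.trace.re) := by
    rw [EuclideanSpace.norm_eq]
    rw [hsumw]
  have halg : algNorm f = B.trace.re := rfl
  have hcard : (n : ℂ) ≠ 0 := Nat.cast_ne_zero.mpr Fintype.card_ne_zero
  refine ⟨H, inferInstance, inferInstance, inferInstance, π, v, w, ?_, ?_⟩
  · rw [hv, hw, Real.mul_self_sqrt hTnn, ← halg]
    exact hf
  · intro x
    have hCconj : ∀ q r : G, (starRingEnd ℂ) (C q r) = C r q := by
      intro q r
      conv_rhs => rw [← hCH]
      simp [Matrix.conjTranspose_apply]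
    have step1 : (inner ℂ ((π x) v) w : ℂ)
        = ∑ p : Fin n × Fin n, (starRingEnd ℂ) (C (x⁻¹ * k.symm p.1) (k.symm p.2))
            * D (k.symm p.1) (k.symm p.2) := by
      rw [PiLp.inner_apply]
      refine Finset.sum_congr rfl fun p _ => ?_
      have : (π x) v p = C (x⁻¹ * k.symm p.1) (k.symm p.2) := by
        show Pi0 x v p = _
        rw [hPi]
        show C (k.symm (k (x⁻¹ * k.symm p.1))) (k.symm (k (k.symm p.2))) = _
        rw [Equiv.symm_apply_apply, Equiv.symm_apply_apply]
      rw [RCLike.inner_apply', this]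
    have step2 : (inner ℂ ((π x) v) w : ℂ)
        = ∑ p : G × G, (starRingEnd ℂ) (C (x⁻¹ * p.1) p.2) * D p.1 p.2 := by
      rw [step1]
      exact (Fintype.sum_equiv (Equiv.prodCongr k k) _ _ (fun p => by simp)).symm
    have step3 : (inner ℂ ((π x) v) w : ℂ) = ∑ a : G, (D * C) a (x⁻¹ * a) := by
      rw [step2, Fintype.sum_prod_type]
      refine Finset.sum_congr rfl fun a _ => ?_
      rw [Matrix.mul_apply]
      refine Finset.sum_congr rfl fun b _ => ?_
      rw [hCconj, mul_comm]
    rw [step3, hDC]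
    have hentry : ∀ a : G, A a (x⁻¹ * a) = f x / n := by
      intro a
      show convMatrix f a (x⁻¹ * a) = f x / n
      unfold convMatrix
      congr 2
      rw [_root_.mul_inv_rev, inv_inv, mul_inv_cancel_left]
    simp only [hentry]
    rw [Finset.sum_const, Finset.card_univ, nsmul_eq_mul]
    field_simp
    rfl
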